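/- arXiv:1912.05157 — 2 statements merged into one kernel-verified Lean document; each statement's English description precedes it below -/
import Mathlib

section
/- Let v be a complex number and define τ_v(n) = Σ_{n1·n2 = n} (n1/n2)^v. Then for every complex s with Re(s) > 1 + 2|Re(v)|, one has Σ_{n=1}^∞ τ_v(n²)/n^s = ζ(s)·ζ(s+2v)·ζ(s−2v)/ζ(2s). -/
open Complex

noncomputable def tauC (v : ℂ) (n : ℕ) : ℂ :=
  ∑ p ∈ Nat.divisorsAntidiagonal n, ((p.1 : ℂ) / (p.2 : ℂ)) ^ v

open ArithmeticFunction LSeries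
open scoped LSeries.notation
open scoped ArithmeticFunction.Moebius ArithmeticFunction.zeta

section Aux

lemma sq_dvd_iff' {a n x : ℕ} (ha : Squarefree a) (hn : n ≠ 0) : x ^ 2 ∣ n ^ 2 * a ↔ x ∣ n := by
  have ha0 : a ≠ 0 := ha.ne_zero
  constructor
  · intro h
    rcases eq_or_ne x 0 with rfl | hx0
    · simp only [ne_eq, pow_eq_zero_iff, OfNat.ofNat_ne_zero, not_false_eq_true, zero_pow,
        zero_dvd_iff, mul_eq_zero] at h
      tauto
    rw [← Nat.factorization_le_iff_dvd hx0 hn]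
    intro p
    have h' := (Nat.factorization_le_iff_dvd (by positivity) (by positivity)).2 h p
    rw [Nat.factorization_mul (by positivity) ha0, Nat.factorization_pow,
      Nat.factorization_pow] at h'
    have := ha.natFactorization_le_one p
    simp only [Finsupp.coe_add, Finsupp.coe_smul, Pi.add_apply, Pi.smul_apply, smul_eq_mul] at h'
    omega
  · intro h
    exact dvd_mul_of_dvd_left (pow_dvd_pow_of_dvd h 2) a

lemma sq_mul_sqf_inj' {a₁ a₂ d₁ d₂ : ℕ} (h1 : Squarefree d₁) (h2 : Squarefree d₂)
    (ha₁ : a₁ ≠ 0) (ha₂ : a₂ ≠ 0) (h : a₁ ^ 2 * d₁ = a₂ ^ 2 * d₂) : d₁ = d₂ ∧ a₁ = a₂ := by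
  have hd1 : d₁ ≠ 0 := h1.ne_zero
  have hd2 : d₂ ≠ 0 := h2.ne_zero
  have key : ∀ (a d : ℕ), a ≠ 0 → Squarefree d → ∀ p, p.Prime →
      (p ∣ d ↔ Odd ((a ^ 2 * d).factorization p)) := by
    intro a d ha hd p hp
    rw [Nat.factorization_mul (by positivity) hd.ne_zero, Nat.factorization_pow]
    have h1 := hd.natFactorization_le_one p
    have h2 : p ∣ d ↔ 1 ≤ d.factorization p := Nat.Prime.dvd_iff_one_le_factorization hp hd.ne_zero
    simp only [Finsupp.coe_add, Finsupp.coe_smul, Pi.add_apply, Pi.smul_apply, smul_eq_mul]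
    rw [h2, Nat.odd_iff]
    omega
  have hdd : d₁ = d₂ := by
    rw [Nat.Squarefree.ext_iff h1 h2]
    intro p hp
    rw [key a₁ d₁ ha₁ h1 p hp, key a₂ d₂ ha₂ h2 p hp, h]
  refine ⟨hdd, ?_⟩
  subst hdd
  have : a₁ ^ 2 = a₂ ^ 2 := Nat.eq_of_mul_eq_mul_right (Nat.pos_of_ne_zero hd1) h
  exact Nat.pow_left_injective (by norm_num) this

lemma cpow_nat_div' (a b : ℕ) (hb : b ≠ 0) (w : ℂ) :
    ((a : ℂ) / b) ^ w = (a : ℂ) ^ w * (b : ℂ) ^ (-w) := by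
  have h1 : ((a : ℂ) / b) = ((a : ℝ) : ℂ) * (((b : ℝ)⁻¹ : ℝ) : ℂ) := by
    push_cast; ring
  rw [h1, mul_cpow_ofReal_nonneg (by positivity) (by positivity)]
  congr 1
  rw [cpow_neg]
  have h2 : (((b : ℝ)⁻¹ : ℝ) : ℂ) = ((b : ℂ))⁻¹ := by push_cast; ring
  rw [h2, inv_cpow]
  rw [Complex.natCast_arg]
  exact Real.pi_ne_zero.symm

lemma cpow_sq' (r : ℝ) (hr : 0 < r) (v : ℂ) :
    ((r : ℂ)) ^ (2 * v) = (((r : ℂ)) ^ 2) ^ v := by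
  have hlog : Complex.log (r : ℂ) = ((Real.log r : ℝ) : ℂ) := (Complex.ofReal_log hr.le).symm
  rw [show ((r:ℂ)^2 : ℂ) = (r:ℂ) ^ (2 : ℂ) by
    rw [show (2:ℂ) = ((2:ℕ):ℂ) by norm_num, cpow_natCast]]
  rw [← cpow_mul]
  · rw [hlog]; simp; exact Real.pi_pos
  · rw [hlog]; simp; exact Real.pi_pos.le

lemma tau_sq_eq (v : ℂ) (n : ℕ) (hn : n ≠ 0) :
    tauC v (n ^ 2) = ∑ p ∈ Nat.divisorsAntidiagonal n,
      (if Squarefree p.1 then (1 : ℂ) else 0) * tauC (2 * v) p.2 := by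
  have key : ∑ x ∈ ((Nat.divisorsAntidiagonal n).filter (fun p => Squarefree p.1)).sigma
        (fun p => Nat.divisorsAntidiagonal p.2),
        ((x.2.1 : ℂ) / (x.2.2 : ℂ)) ^ (2 * v) = tauC v (n ^ 2) := by
    unfold tauC
    refine Finset.sum_bij (fun x _ => (x.2.1 ^ 2 * x.1.1, x.2.2 ^ 2 * x.1.1)) ?_ ?_ ?_ ?_
    · rintro ⟨⟨d, e⟩, a, b⟩ hx
      simp only [Finset.mem_sigma, Finset.mem_filter, Nat.mem_divisorsAntidiagonal] at hx ⊢
      obtain ⟨⟨⟨hde, -⟩, -⟩, hab, -⟩ := hx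
      constructor
      · calc a ^ 2 * d * (b ^ 2 * d) = (d * (a * b)) ^ 2 := by ring
          _ = n ^ 2 := by rw [hab, hde]
      · positivity
    · rintro ⟨⟨d₁, e₁⟩, a₁, b₁⟩ hx₁ ⟨⟨d₂, e₂⟩, a₂, b₂⟩ hx₂ heq
      simp only [Finset.mem_sigma, Finset.mem_filter, Nat.mem_divisorsAntidiagonal] at hx₁ hx₂
      obtain ⟨⟨⟨hde₁, -⟩, hsq₁⟩, hab₁, he₁⟩ := hx₁
      obtain ⟨⟨⟨hde₂, -⟩, hsq₂⟩, hab₂, he₂⟩ := hx₂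
      have ha₁ : a₁ ≠ 0 := by rintro rfl; simp at hab₁; exact he₁ hab₁.symm
      have hb₁ : b₁ ≠ 0 := by rintro rfl; simp at hab₁; exact he₁ hab₁.symm
      have ha₂ : a₂ ≠ 0 := by rintro rfl; simp at hab₂; exact he₂ hab₂.symm
      have hb₂ : b₂ ≠ 0 := by rintro rfl; simp at hab₂; exact he₂ hab₂.symm
      simp only [Prod.mk.injEq] at heq
      obtain ⟨hA, hB⟩ := heq
      obtain ⟨hd, ha⟩ := sq_mul_sqf_inj' hsq₁ hsq₂ ha₁ ha₂ hA
      obtain ⟨-, hb⟩ := sq_mul_sqf_inj' hsq₁ hsq₂ hb₁ hb₂ (hd ▸ hB)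
      subst hd ha hb
      have : e₁ = e₂ := by rw [← hab₁, ← hab₂]
      subst this
      rfl
    · rintro ⟨A, B⟩ hAB
      simp only [Nat.mem_divisorsAntidiagonal] at hAB
      obtain ⟨hABn, hn2⟩ := hAB
      have hA : A ≠ 0 := by rintro rfl; simp at hABn; exact hn2 hABn.symm
      have hB : B ≠ 0 := by rintro rfl; simp at hABn; exact hn2 hABn.symm
      obtain ⟨d, a, hda, hd⟩ := Nat.sq_mul_squarefree A
      have ha0 : a ≠ 0 := by rintro rfl; simp at hda; exact hA hda.symm
      have hd0 : d ≠ 0 := hd.ne_zero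
      have had : a * d ∣ n := by
        refine (sq_dvd_iff' hd hn).1 ?_
        have h2 : (a * d) ^ 2 = A * d := by rw [← hda]; ring
        rw [h2]
        exact mul_dvd_mul (⟨B, hABn.symm⟩ : A ∣ n ^ 2) dvd_rfl
      set b := n / (a * d) with hbdef
      have hadb : a * d * b = n := Nat.mul_div_cancel' had
      have hb0 : b ≠ 0 := by
        intro hb0c
        rw [hb0c, mul_zero] at hadb
        exact hn hadb.symm
      have hBb : B = b ^ 2 * d := by
        have h1 : A * (b ^ 2 * d) = n ^ 2 := by
          calc A * (b ^ 2 * d) = (a ^ 2 * d) * (b ^ 2 * d) := by rw [hda]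
            _ = (a * d * b) ^ 2 := by ring
            _ = n ^ 2 := by rw [hadb]
        exact Nat.eq_of_mul_eq_mul_left (Nat.pos_of_ne_zero hA) (by rw [hABn, h1])
      refine ⟨⟨(d, a * b), (a, b)⟩, ?_, ?_⟩
      · simp only [Finset.mem_sigma, Finset.mem_filter, Nat.mem_divisorsAntidiagonal]
        exact ⟨⟨⟨by rw [← hadb]; ring, hn⟩, hd⟩, trivial, by positivity⟩
      · simp only [Prod.mk.injEq]
        exact ⟨hda, hBb.symm⟩
    · rintro ⟨⟨d, e⟩, a, b⟩ hx
      simp only [Finset.mem_sigma, Finset.mem_filter, Nat.mem_divisorsAntidiagonal] at hx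
      obtain ⟨⟨⟨hde, -⟩, hsq⟩, hab, he⟩ := hx
      have ha : a ≠ 0 := by rintro rfl; simp at hab; exact he hab.symm
      have hb : b ≠ 0 := by rintro rfl; simp at hab; exact he hab.symm
      have hd : d ≠ 0 := hsq.ne_zero
      have hr : (0:ℝ) < (a : ℝ) / b := by positivity
      have h1 : ((a : ℂ) / b) = ((((a:ℝ)/b : ℝ)) : ℂ) := by push_cast; ring
      have h2 : ((a ^ 2 * d : ℕ) : ℂ) / ((b ^ 2 * d : ℕ) : ℂ) = ((a : ℂ) / b) ^ 2 := by
        have hdC : (d : ℂ) ≠ 0 := Nat.cast_ne_zero.mpr hd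
        push_cast
        rw [div_pow, mul_div_mul_right _ _ hdC]
      rw [h2, h1, cpow_sq' _ hr]
  rw [← key]
  rw [Finset.sum_sigma]
  rw [Finset.sum_filter]
  refine Finset.sum_congr rfl fun p hp => ?_
  split_ifs with h
  · rw [one_mul]; rfl
  · simp

lemma sum_div_moebius_c (b : ℕ) :
    (∑ d ∈ b.divisors, (μ d : ℂ)) = if b = 1 then 1 else 0 := by
  have h := congrArg (fun f => f b) moebius_mul_coe_zeta
  simp only [mul_apply, one_apply] at h
  have h2 : ∀ p ∈ b.divisorsAntidiagonal, (μ p.1 * (ζ : ArithmeticFunction ℤ) p.2 : ℤ)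
      = μ p.1 := by
    intro p hp
    have := (Nat.ne_zero_of_mem_divisorsAntidiagonal hp).2
    simp [zeta_apply_ne this]
  rw [Finset.sum_congr rfl h2] at h
  rw [Nat.sum_divisorsAntidiagonal (fun i _ => (μ i : ℤ))] at h
  have : ((∑ d ∈ b.divisors, (μ d : ℤ) : ℤ) : ℂ) = ((if b = 1 then 1 else 0 : ℤ) : ℂ) := by
    exact_mod_cast congrArg (fun z : ℤ => (z : ℂ)) h
  push_cast at this
  simpa using this

noncomputable def Msq : ℕ → ℂ := fun n => if n.sqrt * n.sqrt = n then (μ n.sqrt : ℂ) else 0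

noncomputable def sqfc : ℕ → ℂ := fun n => if Squarefree n then 1 else 0

noncomputable def pf (w : ℂ) : ℕ → ℂ := fun n => (n : ℂ) ^ w

lemma sqfc_eq_conv : sqfc = 1 ⍟ Msq := by
  funext n
  rcases eq_or_ne n 0 with rfl | hn
  · simp [sqfc, convolution_map_zero, not_squarefree_zero]
  rw [convolution_def]
  simp only [Pi.one_apply, one_mul]
  rw [Nat.sum_divisorsAntidiagonal' (fun _ j => Msq j)]
  obtain ⟨a, b, hab, ha⟩ := Nat.sq_mul_squarefree n
  have hb0 : b ≠ 0 := by rintro rfl; simp at hab; exact hn hab.symm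
  have ha0 : a ≠ 0 := by rintro rfl; simp at hab; exact hn hab.symm
  have hfilter : ∑ d ∈ n.divisors, Msq d
      = ∑ d ∈ n.divisors.filter (fun d => d.sqrt * d.sqrt = d), Msq d := by
    rw [Finset.sum_filter]
    refine Finset.sum_congr rfl fun d _ => ?_
    unfold Msq
    split_ifs with h <;> simp [h]
  rw [hfilter]
  have hbij : ∑ d ∈ n.divisors.filter (fun d => d.sqrt * d.sqrt = d), Msq d
      = ∑ m ∈ b.divisors, (μ m : ℂ) := by
    symm
    refine Finset.sum_bij (fun m _ => m * m) ?_ ?_ ?_ ?_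
    · intro m hm
      simp only [Nat.mem_divisors] at hm
      simp only [Finset.mem_filter, Nat.mem_divisors, Nat.sqrt_eq]
      refine ⟨⟨?_, hn⟩, trivial⟩
      calc m * m = m ^ 2 := (sq m).symm
        _ ∣ b ^ 2 * a := (sq_dvd_iff' ha hb0).2 hm.1
        _ = n := hab
    · intro m₁ _ m₂ _ h
      exact Nat.mul_self_inj.mp h
    · intro d hd
      simp only [Finset.mem_filter, Nat.mem_divisors] at hd
      obtain ⟨⟨hdvd, -⟩, hsq⟩ := hd
      refine ⟨d.sqrt, ?_, hsq⟩
      simp only [Nat.mem_divisors]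
      refine ⟨?_, hb0⟩
      refine (sq_dvd_iff' ha hb0).1 ?_
      calc d.sqrt ^ 2 = d.sqrt * d.sqrt := sq d.sqrt
        _ = d := hsq
        _ ∣ b ^ 2 * a := by rw [hab]; exact hdvd
    · intro m _
      unfold Msq
      simp [Nat.sqrt_eq]
  rw [hbij, sum_div_moebius_c]
  unfold sqfc
  have : b = 1 ↔ Squarefree n := by
    constructor
    · rintro rfl; rw [← hab]; simpa using ha
    · intro hsq
      have : b * b ∣ n := by rw [← hab]; exact Dvd.intro a (by ring)
      simpa [Nat.isUnit_iff] using hsq b this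
  exact (if_congr this rfl rfl).symm

lemma Msq_comp (s : ℂ) : (term Msq s) ∘ (fun m => m * m) = term ↗μ (2 * s) := by
  funext m
  rcases eq_or_ne m 0 with rfl | hm
  · simp [term]
  have hmm : m * m ≠ 0 := by positivity
  rw [Function.comp_apply, term_of_ne_zero hmm, term_of_ne_zero hm]
  unfold Msq
  simp only [Nat.sqrt_eq, if_pos rfl]
  congr 1
  have h0 : (0:ℝ) < (m:ℝ) := by positivity
  have := cpow_sq' (m : ℝ) h0 s
  push_cast at this ⊢
  rw [this, sq]

lemma Msq_vanish (s : ℂ) : ∀ x ∉ Set.range (fun m => m * m), term Msq s x = 0 := by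
  intro x hx
  rcases eq_or_ne x 0 with rfl | hx0
  · simp [term]
  rw [term_of_ne_zero hx0]
  unfold Msq
  rw [if_neg, zero_div]
  intro h
  exact hx ⟨x.sqrt, h⟩

lemma Msq_inj : Function.Injective (fun m : ℕ => m * m) := fun _ _ h => Nat.mul_self_inj.mp h

lemma Msq_summable {s : ℂ} (hs : 1 < (2 * s).re) : LSeriesSummable Msq s := by
  have h1 : Summable (term ↗μ (2 * s)) := LSeriesSummable_moebius_iff.2 hs
  have := (Msq_inj.summable_iff (f := term Msq s) (Msq_vanish s))
  rw [show (term Msq s) ∘ (fun m : ℕ => m * m) = term ↗μ (2*s) from Msq_comp s] at this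
  exact this.1 h1

lemma Msq_LSeries {s : ℂ} : LSeries Msq s = LSeries ↗μ (2 * s) := by
  unfold LSeries
  rw [← Msq_inj.tsum_eq (f := term Msq s) ?hsup]
  · rw [show (fun c : ℕ => term Msq s (c * c)) = term ↗μ (2*s) from Msq_comp s]
  case hsup =>
    intro x hx
    by_contra h
    exact hx (Msq_vanish s x h)

lemma pf_term (w s : ℂ) (n : ℕ) : term (pf w) s n = term 1 (s - w) n := by
  rcases eq_or_ne n 0 with rfl | hn
  · simp [term]
  rw [term_of_ne_zero hn, term_of_ne_zero hn]
  have hn0 : (n : ℂ) ≠ 0 := Nat.cast_ne_zero.mpr hn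
  rw [Pi.one_apply, cpow_sub _ _ hn0]
  unfold pf
  have h1 : (n : ℂ) ^ w ≠ 0 := by
    rw [Ne, cpow_eq_zero_iff]; tauto
  have h2 : (n : ℂ) ^ s ≠ 0 := by
    rw [Ne, cpow_eq_zero_iff]; tauto
  field_simp

lemma pf_summable {w s : ℂ} (h : 1 < (s - w).re) : LSeriesSummable (pf w) s := by
  unfold LSeriesSummable
  rw [show term (pf w) s = term 1 (s - w) from funext (pf_term w s)]
  exact LSeriesSummable_one_iff.2 h

lemma pf_LSeries {w s : ℂ} (h : 1 < (s - w).re) : LSeries (pf w) s = riemannZeta (s - w) := by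
  unfold LSeries
  rw [show term (pf w) s = term 1 (s - w) from funext (pf_term w s)]
  exact LSeries_one_eq_riemannZeta h

lemma tauC_conv (w : ℂ) : tauC w = pf w ⍟ pf (-w) := by
  funext n
  rcases eq_or_ne n 0 with rfl | hn
  · simp [tauC, convolution_map_zero]
  rw [convolution_def]
  unfold tauC
  refine Finset.sum_congr rfl fun p hp => ?_
  obtain ⟨-, h2⟩ := Nat.ne_zero_of_mem_divisorsAntidiagonal hp
  exact cpow_nat_div' p.1 p.2 h2 w

end Aux

theorem tsum_tau_sq (v s : ℂ) (hs : 1 + 2 * |v.re| < s.re) :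
    ∑' n : ℕ+, tauC v (n ^ 2) / (n : ℂ) ^ s =
      riemannZeta s * riemannZeta (s + 2 * v) * riemannZeta (s - 2 * v) /
        riemannZeta (2 * s) := by
  have habs : 0 ≤ |v.re| := abs_nonneg _
  have hs1 : 1 < s.re := by linarith
  have hs2 : 1 < (2 * s).re := by
    simp only [mul_re, ofReal_re, re_ofNat, im_ofNat, mul_im, zero_mul, sub_zero]
    linarith
  have hsp : 1 < (s - 2 * v).re := by
    simp only [sub_re, mul_re, re_ofNat, im_ofNat, zero_mul, sub_zero]
    linarith [le_abs_self v.re]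
  have hsm : 1 < (s + 2 * v).re := by
    simp only [add_re, mul_re, re_ofNat, im_ofNat, zero_mul, sub_zero]
    linarith [neg_abs_le v.re]
  -- the function whose L-series we compute
  set F : ℕ → ℂ := fun n => tauC v (n ^ 2) with hF
  have hFconv : F = sqfc ⍟ (tauC (2 * v)) := by
    funext n
    rcases eq_or_ne n 0 with rfl | hn
    · simp [hF, tauC, convolution_map_zero]
    rw [convolution_def]
    exact tau_sq_eq v n hn
  -- summability of the pieces
  have hsum_pf1 : LSeriesSummable (pf (2 * v)) s := pf_summable (by
    have : (s - 2 * v).re = s.re - (2*v).re := by simp [sub_re]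
    simpa using hsp)
  have hsum_pf2 : LSeriesSummable (pf (-(2 * v))) s := pf_summable (by
    have h : s - -(2 * v) = s + 2 * v := by ring
    rw [h]; exact hsm)
  have hsum_tau : LSeriesSummable (tauC (2 * v)) s := by
    rw [tauC_conv]
    exact hsum_pf1.convolution hsum_pf2
  have hsum_one : LSeriesSummable 1 s := LSeriesSummable_one_iff.2 hs1
  have hsum_Msq : LSeriesSummable Msq s := Msq_summable hs2
  have hsum_sqfc : LSeriesSummable sqfc s := by
    rw [sqfc_eq_conv]
    exact hsum_one.convolution hsum_Msq
  have hsum_F : LSeriesSummable F s := by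
    rw [hFconv]
    exact hsum_sqfc.convolution hsum_tau
  -- compute the L-series
  have hLmu : LSeries ↗μ (2 * s) = (riemannZeta (2 * s))⁻¹ := by
    have h := LSeries_zeta_mul_Lseries_moebius hs2
    rw [LSeries_zeta_eq_riemannZeta hs2] at h
    field_simp [riemannZeta_ne_zero_of_one_lt_re hs2] at h ⊢
    linear_combination h
  have hLF : LSeries F s = riemannZeta s * riemannZeta (s + 2 * v) * riemannZeta (s - 2 * v) /
      riemannZeta (2 * s) := by
    rw [hFconv, LSeries_convolution' hsum_sqfc hsum_tau]
    rw [sqfc_eq_conv, LSeries_convolution' hsum_one hsum_Msq]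
    rw [tauC_conv, LSeries_convolution' hsum_pf1 hsum_pf2]
    rw [LSeries_one_eq_riemannZeta hs1, Msq_LSeries, hLmu]
    rw [pf_LSeries (w := 2 * v) (by simpa using hsp)]
    rw [pf_LSeries (w := -(2 * v)) (by rw [show s - -(2*v) = s + 2*v by ring]; exact hsm)]
    field_simp
    ring
  -- convert the ℕ+ tsum to the LSeries
  have hconv : ∑' n : ℕ+, tauC v (n ^ 2) / (n : ℂ) ^ s = LSeries F s := by
    have e1 : ∑' n : ℕ+, tauC v (n ^ 2) / (n : ℂ) ^ s
        = ∑' n : ℕ, tauC v ((n + 1) ^ 2) / ((n + 1 : ℕ) : ℂ) ^ s := by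
      rw [← Equiv.pnatEquivNat.symm.tsum_eq (fun n : ℕ+ => tauC v (n ^ 2) / (n : ℂ) ^ s)]
      refine tsum_congr fun n => ?_
      rw [show ((Equiv.pnatEquivNat.symm n : ℕ+) : ℕ) = n + 1 from rfl]
    have e2 : LSeries F s = ∑' n : ℕ, term F s (n + 1) := by
      unfold LSeries
      rw [Summable.tsum_eq_zero_add hsum_F]
      simp [term]
    rw [e1, e2]
    refine tsum_congr fun n => ?_
    rw [term_of_ne_zero (Nat.succ_ne_zero n)]
  rw [hconv, hLF]
end

section
/- Let x > 2 be real. Then the supremum over y ∈ (0,1) of the function f(y) = y(1−y)/(x²/4 − y) equals (x/2 + √(x²/4 − 1))^{−2}, and it is attained at y₀ = x²/4 − (x/2)·√(x²/4 − 1), which lies in (0,1). -/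
theorem sup_attained (x : ℝ) (hx : 2 < x) :
    let f : ℝ → ℝ := fun y => y * (1 - y) / (x ^ 2 / 4 - y)
    let y₀ : ℝ := x ^ 2 / 4 - x / 2 * Real.sqrt (x ^ 2 / 4 - 1)
    y₀ ∈ Set.Ioo (0 : ℝ) 1 ∧
      f y₀ = (x / 2 + Real.sqrt (x ^ 2 / 4 - 1))⁻¹ ^ 2 ∧
      ∀ y ∈ Set.Ioo (0 : ℝ) 1, f y ≤ (x / 2 + Real.sqrt (x ^ 2 / 4 - 1))⁻¹ ^ 2 := by
  intro f y₀
  set s := Real.sqrt (x ^ 2 / 4 - 1) with hs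
  have hs2 : s ^ 2 = x ^ 2 / 4 - 1 := Real.sq_sqrt (by nlinarith)
  have hs0 : 0 < s := Real.sqrt_pos.2 (by nlinarith)
  have hxs : s < x / 2 := by nlinarith [sq_nonneg (x / 2 - s)]
  have hsum : 0 < x / 2 + s := by linarith
  have hy0 : 0 < y₀ := by
    show 0 < x ^ 2 / 4 - x / 2 * s
    nlinarith
  have hy1 : y₀ < 1 := by
    show x ^ 2 / 4 - x / 2 * s < 1
    nlinarith
  have hd : 0 < x ^ 2 / 4 - y₀ := by
    show 0 < x ^ 2 / 4 - (x ^ 2 / 4 - x / 2 * s)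
    nlinarith
  refine ⟨⟨hy0, hy1⟩, ?_, ?_⟩
  · show y₀ * (1 - y₀) / (x ^ 2 / 4 - y₀) = (x / 2 + s)⁻¹ ^ 2
    rw [inv_pow, inv_eq_one_div, div_eq_div_iff hd.ne' (by positivity)]
    show (x ^ 2 / 4 - x / 2 * s) * (1 - (x ^ 2 / 4 - x / 2 * s)) * (x / 2 + s) ^ 2
        = 1 * (x ^ 2 / 4 - (x ^ 2 / 4 - x / 2 * s))
    linear_combination (x / 2 * (x / 2 - s - x / 2 * (s ^ 2 - x ^ 2 / 4 + 1))) * hs2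
  · intro y hy
    obtain ⟨h0, h1⟩ := hy
    have hdy : 0 < x ^ 2 / 4 - y := by nlinarith
    show y * (1 - y) / (x ^ 2 / 4 - y) ≤ (x / 2 + s)⁻¹ ^ 2
    rw [inv_pow, inv_eq_one_div, div_le_div_iff₀ hdy (by positivity)]
    nlinarith [sq_nonneg ((x / 2 + s) * y - x / 2)]
end
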